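/- Let C be a category that has multi-sums and has pullbacks. For every commutative diagram consisting of multi-sum elements A → M ← B and C → N ← D, morphisms A → C and B → D, a cospan C → X ← D factoring through N, and a morphism M → X factoring the induced cospan A → X ← B, there exists a universal arrow M → N making the whole diagram commute (multi-sum extension lemma). -/

import Mathlib

open CategoryTheory CategoryTheory.Limits

universe v u

variable {C : Type u} [Category.{v} C]

/-- A multi-sum of objects `A` and `B`: a family of cospans `A ⟶ obj j ⟵ B` such
that every cospan `A ⟶ X ⟵ B` factors through some member, essentially uniquely. -/
structure MultiSum (A B : C) where
  J : Type (max u v)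
  obj : J → C
  inl : ∀ j, A ⟶ obj j
  inr : ∀ j, B ⟶ obj j
  factor : ∀ {X : C} (f : A ⟶ X) (g : B ⟶ X),
    ∃ (j : J) (x : obj j ⟶ X), inl j ≫ x = f ∧ inr j ≫ x = g
  uniq : ∀ {X : C} (f : A ⟶ X) (g : B ⟶ X) (j k : J)
    (x : obj j ⟶ X) (y : obj k ⟶ X),
    inl j ≫ x = f → inr j ≫ x = g → inl k ≫ y = f → inr k ≫ y = g →
    ∃! φ : obj j ⟶ obj k, IsIso φ ∧ φ ≫ y = x

/-- `C` has multi-sums. -/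
def HasMultiSums (C : Type u) [Category.{v} C] : Prop :=
  ∀ A B : C, Nonempty (MultiSum A B)

/-- Multi-sum extension lemma: in a category with multi-sums and pullbacks, given
multi-sum elements `A ⟶ M ⟵ B` and `Cc ⟶ N ⟵ D`, morphisms `a : A ⟶ Cc` and
`b : B ⟶ D`, a cospan `Cc ⟶ X ⟵ D` factoring through `N` via `u`, and a morphism
`v : M ⟶ X` factoring the induced cospan `A ⟶ X ⟵ B`, there exists a universal
arrow `M ⟶ N` making the whole diagram commute. -/
theorem multiSum_extension [HasPullbacks C]
    (hms : HasMultiSums C)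
    {A B Cc D X : C}
    (ms : MultiSum A B) (j : ms.J) (ns : MultiSum Cc D) (k : ns.J)
    (a : A ⟶ Cc) (b : B ⟶ D)
    (c : Cc ⟶ X) (d : D ⟶ X)
    (u : ns.obj k ⟶ X) (hu₁ : ns.inl k ≫ u = c) (hu₂ : ns.inr k ≫ u = d)
    (v : ms.obj j ⟶ X) (hv₁ : ms.inl j ≫ v = a ≫ c) (hv₂ : ms.inr j ≫ v = b ≫ d) :
    ∃ w : ms.obj j ⟶ ns.obj k,
      ms.inl j ≫ w = a ≫ ns.inl k ∧ ms.inr j ≫ w = b ≫ ns.inr k ∧ w ≫ u = v := by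
  -- Form the pullback of `v : M ⟶ X` and `u : N ⟶ X`.
  let P := pullback v u
  have hA : a ≫ ns.inl k ≫ u = ms.inl j ≫ v := by
    rw [hu₁, hv₁]
  have hB : b ≫ ns.inr k ≫ u = ms.inr j ≫ v := by
    rw [hu₂, hv₂]
  -- Lift the cospan `A ⟶ P ⟵ B` through the pullback.
  let pA : A ⟶ P := pullback.lift (ms.inl j) (a ≫ ns.inl k) (by rw [Category.assoc]; exact hA.symm)
  let pB : B ⟶ P := pullback.lift (ms.inr j) (b ≫ ns.inr k) (by rw [Category.assoc]; exact hB.symm)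
  obtain ⟨j', x, hx₁, hx₂⟩ := ms.factor pA pB
  -- `x ≫ (pullback.fst v u)` furnishes another factorization of the cospan `A ⟶ M ⟵ B`.
  have hfst₁ : ms.inl j' ≫ x ≫ (pullback.fst v u) = ms.inl j := by
    rw [← Category.assoc, hx₁]; exact pullback.lift_fst _ _ _
  have hfst₂ : ms.inr j' ≫ x ≫ (pullback.fst v u) = ms.inr j := by
    rw [← Category.assoc, hx₂]; exact pullback.lift_fst _ _ _
  obtain ⟨φ, ⟨hφiso, hφ⟩, -⟩ := ms.uniq (ms.inl j) (ms.inr j) j' j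
    (x ≫ (pullback.fst v u)) (𝟙 _) hfst₁ hfst₂ (by simp) (by simp)
  rw [Category.comp_id] at hφ
  subst hφ
  refine ⟨inv (x ≫ (pullback.fst v u)) ≫ x ≫ (pullback.snd v u), ?_, ?_, ?_⟩
  · have : ms.inl j ≫ inv (x ≫ (pullback.fst v u)) = ms.inl j' := by
      rw [← hfst₁, Category.assoc, IsIso.hom_inv_id, Category.comp_id]
    rw [← Category.assoc, this, ← Category.assoc, hx₁]
    exact pullback.lift_snd _ _ _
  · have : ms.inr j ≫ inv (x ≫ (pullback.fst v u)) = ms.inr j' := by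
      rw [← hfst₂, Category.assoc, IsIso.hom_inv_id, Category.comp_id]
    rw [← Category.assoc, this, ← Category.assoc, hx₂]
    exact pullback.lift_snd _ _ _
  · rw [Category.assoc, Category.assoc, ← pullback.condition]
    rw [← Category.assoc x, ← Category.assoc, IsIso.inv_hom_id, Category.id_comp]
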